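/- arXiv:1201.4078 — 2 statements merged into one kernel-verified Lean document; each statement's English description precedes it below -/
import Mathlib

section
/- Let B be a d×d real matrix such that Bᵀ + B is negative semidefinite, and let K = ker(Bᵀ+B). Define A : K → K by Ax = P_K(Bx) and C : K → K^⊥ by Cx = P_{K⊥}(Bx), where P_K and P_{K⊥} are the orthogonal projections of ℝ^d onto K and its orthogonal complement K^⊥. Then B is Hurwitz if and only if the pair (C, A) is observable, i.e., if and only if the only x ∈ K satisfying C(exp(tA)x) = 0 for all t ∈ ℝ is x = 0. -/
open Matrix

noncomputable section

variable {d : ℕ}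

/-- A real square matrix is Hurwitz if every complex eigenvalue has negative real part. -/
def IsHurwitz (B : Matrix (Fin d) (Fin d) ℝ) : Prop :=
  ∀ μ : ℂ, μ ∈ spectrum ℂ (B.map (algebraMap ℝ ℂ)) → μ.re < 0

/-- `K = ker(Bᵀ + B)` as a subspace of `ℝ^d`. -/
def Ker (B : Matrix (Fin d) (Fin d) ℝ) : Submodule ℝ (EuclideanSpace ℝ (Fin d)) :=
  LinearMap.ker (Matrix.toEuclideanLin (Bᵀ + B))

/-- Orthogonal projection onto a subspace, as an endomorphism of the ambient space. -/
def projL (K : Submodule ℝ (EuclideanSpace ℝ (Fin d))) :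
    EuclideanSpace ℝ (Fin d) →L[ℝ] EuclideanSpace ℝ (Fin d) :=
  K.subtypeL.comp K.orthogonalProjectionOnto

/-- The map `A : K → K`, `x ↦ P_K(Bx)`, lifted to `ℝ^d` as `P_K ∘ B ∘ P_K`. -/
def Amap (B : Matrix (Fin d) (Fin d) ℝ) :
    EuclideanSpace ℝ (Fin d) →L[ℝ] EuclideanSpace ℝ (Fin d) :=
  (projL (Ker B)).comp
    ((LinearMap.toContinuousLinearMap (Matrix.toEuclideanLin B)).comp (projL (Ker B)))

/-- The map `C : K → K^⊥`, `x ↦ P_{K^⊥}(Bx)`. -/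
def Cval (B : Matrix (Fin d) (Fin d) ℝ) (x : EuclideanSpace ℝ (Fin d)) : ↥(Ker B)ᗮ :=
  (Ker B)ᗮ.orthogonalProjectionOnto (Matrix.toEuclideanLin B x)

/-! ### Auxiliary lemmas -/

section Aux

lemma mem_Ker_iff (B : Matrix (Fin d) (Fin d) ℝ) (x : EuclideanSpace ℝ (Fin d)) :
    x ∈ Ker B ↔ (Bᵀ + B) *ᵥ (WithLp.equiv 2 _ x) = 0 := by
  rw [Ker, LinearMap.mem_ker, Matrix.toEuclideanLin_apply]
  constructor
  · intro h; simpa using congrArg (WithLp.equiv 2 _) h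
  · intro h; simp [h]; exact h

lemma projL_of_mem {K : Submodule ℝ (EuclideanSpace ℝ (Fin d))} {x} (hx : x ∈ K) :
    projL K x = x := by
  simpa [projL] using congrArg Subtype.val (K.orthogonalProjectionOnto_mem_subspace_eq_self ⟨x, hx⟩)

/-- `Cval B x = 0` iff `Bx ∈ K`. -/
lemma cval_eq_zero_iff (B : Matrix (Fin d) (Fin d) ℝ) (x : EuclideanSpace ℝ (Fin d)) :
    Cval B x = 0 ↔ Matrix.toEuclideanLin B x ∈ Ker B := by
  rw [Cval, Submodule.orthogonalProjectionOnto_eq_zero_iff, Submodule.orthogonal_orthogonal]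

/-- Uniqueness of solutions to `y' = Ay` via the exponential. -/
lemma exp_ode_unique {E : Type*} [NormedAddCommGroup E] [NormedSpace ℝ E] [CompleteSpace E]
    (A : E →L[ℝ] E) (g : ℝ → E)
    (hg : ∀ t, HasDerivAt g (A (g t)) t) (t : ℝ) :
    NormedSpace.exp (t • A) (g 0) = g t := by
  have key : ∀ s : ℝ, HasDerivAt (fun s : ℝ => NormedSpace.exp ((t - s) • A) (g s)) 0 s := by
    intro s
    have h1 : HasDerivAt (fun s : ℝ => NormedSpace.exp ((t - s) • A))
        (-(NormedSpace.exp ((t - s) • A) * A)) s := by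
      have h0 : HasDerivAt (fun u : ℝ => NormedSpace.exp (u • A))
          (NormedSpace.exp ((t - s) • A) * A) (t - s) :=
        hasDerivAt_exp_smul_const A (t - s)
      have h2 : HasDerivAt (fun s : ℝ => t - s) (-1 : ℝ) s := by
        simpa using (hasDerivAt_id s).const_sub t
      have h3 := h0.scomp s h2
      simp only [neg_smul, one_smul] at h3
      exact h3
    have := h1.clm_apply (hg s)
    simpa [ContinuousLinearMap.mul_apply] using this
  have hconst : ∀ a b : ℝ, (fun s : ℝ => NormedSpace.exp ((t - s) • A) (g s)) a
      = (fun s : ℝ => NormedSpace.exp ((t - s) • A) (g s)) b := by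
    intro a b
    exact is_const_of_deriv_eq_zero (fun s => (key s).differentiableAt)
      (fun s => (key s).deriv) a b
  have := hconst t 0
  simpa [NormedSpace.exp_zero] using this.symm

/-- casting real vectors to complex vectors -/
def castc (v : Fin d → ℝ) : Fin d → ℂ := fun i => (v i : ℂ)

lemma castc_mulVec (B : Matrix (Fin d) (Fin d) ℝ) (v : Fin d → ℝ) :
    (B.map (algebraMap ℝ ℂ)) *ᵥ castc v = castc (B *ᵥ v) := by
  funext i
  simp [castc, mulVec, dotProduct, Matrix.map_apply]

lemma castc_eq_zero_iff {v : Fin d → ℝ} : castc v = 0 ↔ v = 0 := by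
  constructor
  · intro h; funext i
    have := congrFun h i
    simpa [castc] using this
  · rintro rfl; funext i; simp [castc]

lemma star_dotProduct_self_pos {v : Fin d → ℂ} (hv : v ≠ 0) :
    (star v ⬝ᵥ v) = ((∑ i, Complex.normSq (v i) : ℝ) : ℂ) ∧
      (0 : ℝ) < ∑ i, Complex.normSq (v i) := by
  constructor
  · simp only [dotProduct, Pi.star_apply]
    push_cast
    refine Finset.sum_congr rfl fun i _ => ?_
    rw [mul_comm]
    exact (Complex.mul_conj (v i))
  · have : ∃ i, v i ≠ 0 := by
      by_contra h
      push_neg at h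
      exact hv (funext h)
    obtain ⟨i, hi⟩ := this
    refine Finset.sum_pos' (fun j _ => Complex.normSq_nonneg _) ⟨i, Finset.mem_univ i, ?_⟩
    exact Complex.normSq_pos.mpr hi

/-- transpose dot product identity over ℂ for a real matrix -/
lemma star_dot_transpose_mulVec (B : Matrix (Fin d) (Fin d) ℝ) (u : Fin d → ℂ) (μ : ℂ)
    (hu : (B.map (algebraMap ℝ ℂ)) *ᵥ u = μ • u) :
    star u ⬝ᵥ ((B.map (algebraMap ℝ ℂ))ᵀ *ᵥ u) = (starRingEnd ℂ) μ * (star u ⬝ᵥ u) := by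
  have h1 : star u ⬝ᵥ ((B.map (algebraMap ℝ ℂ))ᵀ *ᵥ u)
      = ((B.map (algebraMap ℝ ℂ)) *ᵥ star u) ⬝ᵥ u := by
    rw [Matrix.dotProduct_mulVec, Matrix.vecMul_transpose]
  have h2 : (B.map (algebraMap ℝ ℂ)) *ᵥ star u = star ((B.map (algebraMap ℝ ℂ)) *ᵥ u) := by
    funext i
    simp [mulVec, dotProduct, Matrix.map_apply, map_sum, mul_comm]
  rw [h1, h2, hu, star_smul, smul_dotProduct]
  rfl

/-- an eigenvalue of `Bc` restricted to a subspace of `ker (Bᵀ+B)c` has zero real part -/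
lemma re_eq_zero_of_eigen_ker (B : Matrix (Fin d) (Fin d) ℝ) (μ : ℂ) (u : Fin d → ℂ)
    (hu : u ≠ 0) (heig : (B.map (algebraMap ℝ ℂ)) *ᵥ u = μ • u)
    (hker : ((Bᵀ + B).map (algebraMap ℝ ℂ)) *ᵥ u = 0) : μ.re = 0 := by
  obtain ⟨hs, hspos⟩ := star_dotProduct_self_pos hu
  have htr := star_dot_transpose_mulVec B u μ heig
  have hmap : ((Bᵀ + B).map (algebraMap ℝ ℂ))
      = (B.map (algebraMap ℝ ℂ))ᵀ + (B.map (algebraMap ℝ ℂ)) := by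
    rw [Matrix.map_add _ (map_add _), Matrix.transpose_map]
  rw [hmap, add_mulVec] at hker
  have h0 : star u ⬝ᵥ ((B.map (algebraMap ℝ ℂ))ᵀ *ᵥ u)
      + star u ⬝ᵥ ((B.map (algebraMap ℝ ℂ)) *ᵥ u) = 0 := by
    rw [← dotProduct_add, hker, dotProduct_zero]
  rw [htr, heig] at h0
  have h1 : star u ⬝ᵥ (μ • u) = μ * (star u ⬝ᵥ u) := by
    rw [dotProduct_smul]; rfl
  rw [h1, hs] at h0
  have h2 : ((starRingEnd ℂ) μ + μ) * ((∑ i, Complex.normSq (u i) : ℝ) : ℂ) = 0 := by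
    linear_combination h0
  have h3 : (starRingEnd ℂ) μ + μ = 0 := by
    rcases mul_eq_zero.mp h2 with h | h
    · exact h
    · exfalso
      have : (∑ i, Complex.normSq (u i) : ℝ) = 0 := by exact_mod_cast h
      linarith
  have := congrArg Complex.re h3
  simp [Complex.add_re, Complex.conj_re] at this
  linarith [this]

lemma hasEigen_mem_spectrum {μ : ℂ} {u : Fin d → ℂ} (B : Matrix (Fin d) (Fin d) ℝ)
    (hu : u ≠ 0) (heig : (B.map (algebraMap ℝ ℂ)) *ᵥ u = μ • u) :
    μ ∈ spectrum ℂ (B.map (algebraMap ℝ ℂ)) := by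
  rw [← AlgEquiv.spectrum_eq (Matrix.toLinAlgEquiv' : Matrix (Fin d) (Fin d) ℂ ≃ₐ[ℂ] _)]
  rw [← Module.End.hasEigenvalue_iff_mem_spectrum]
  refine Module.End.hasEigenvalue_of_hasEigenvector ⟨?_, hu⟩
  rw [Module.End.mem_eigenspace_iff, Matrix.toLinAlgEquiv'_apply, heig]

lemma spectrum_exists_eigenvector {μ : ℂ} (B : Matrix (Fin d) (Fin d) ℝ)
    (h : μ ∈ spectrum ℂ (B.map (algebraMap ℝ ℂ))) :
    ∃ u : Fin d → ℂ, u ≠ 0 ∧ (B.map (algebraMap ℝ ℂ)) *ᵥ u = μ • u := by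
  rw [← AlgEquiv.spectrum_eq (Matrix.toLinAlgEquiv' : Matrix (Fin d) (Fin d) ℂ ≃ₐ[ℂ] _)] at h
  rw [← Module.End.hasEigenvalue_iff_mem_spectrum] at h
  obtain ⟨u, hmem, hne⟩ := h.exists_hasEigenvector
  exact ⟨u, hne, by rw [← Matrix.toLinAlgEquiv'_apply, Module.End.mem_eigenspace_iff.mp hmem]⟩

lemma amap_eq (B : Matrix (Fin d) (Fin d) ℝ) {z : EuclideanSpace ℝ (Fin d)}
    (h1 : z ∈ Ker B) (h2 : Matrix.toEuclideanLin B z ∈ Ker B) :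
    Amap B z = Matrix.toEuclideanLin B z := by
  show projL (Ker B) ((LinearMap.toContinuousLinearMap (Matrix.toEuclideanLin B))
    (projL (Ker B) z)) = _
  rw [projL_of_mem h1]
  show projL (Ker B) (Matrix.toEuclideanLin B z) = _
  rw [projL_of_mem h2]

lemma re_quadratic (M : Matrix (Fin d) (Fin d) ℝ) (v : Fin d → ℂ) :
    (star v ⬝ᵥ ((M.map (algebraMap ℝ ℂ)) *ᵥ v)).re
      = (fun i => (v i).re) ⬝ᵥ (M *ᵥ fun i => (v i).re)
        + (fun i => (v i).im) ⬝ᵥ (M *ᵥ fun i => (v i).im) := by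
  have h1 : star v ⬝ᵥ ((M.map (algebraMap ℝ ℂ)) *ᵥ v)
      = ∑ i, ∑ j, (starRingEnd ℂ) (v i) * ((M i j : ℂ) * v j) := by
    simp [dotProduct, mulVec, Matrix.map_apply, Finset.mul_sum]
  rw [h1, Complex.re_sum]
  simp only [Complex.re_sum]
  rw [dotProduct, dotProduct, ← Finset.sum_add_distrib]
  refine Finset.sum_congr rfl fun i _ => ?_
  simp only [mulVec, dotProduct, Finset.mul_sum, ← Finset.sum_add_distrib, Complex.re_sum]
  refine Finset.sum_congr rfl fun j _ => ?_
  simp [Complex.mul_re, Complex.conj_re, Complex.conj_im]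
  try ring

lemma psd_neg (B : Matrix (Fin d) (Fin d) ℝ)
    (hB : ∀ x : Fin d → ℝ, x ⬝ᵥ ((Bᵀ + B) *ᵥ x) ≤ 0) :
    Matrix.PosSemidef (-(Bᵀ + B)) := by
  rw [Matrix.posSemidef_iff_dotProduct_mulVec]
  constructor
  · ext i j
    simp [Matrix.conjTranspose_apply, Matrix.transpose_apply, add_comm]
  · intro x
    have := hB x
    simp only [star_trivial, neg_mulVec, dotProduct_neg]
    linarith

lemma eigen_parts (B : Matrix (Fin d) (Fin d) ℝ) (μ : ℂ) (v : Fin d → ℂ)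
    (heig : (B.map (algebraMap ℝ ℂ)) *ᵥ v = μ • v) (hre : μ.re = 0) :
    B *ᵥ (fun i => (v i).re) = (-μ.im) • (fun i => (v i).im) ∧
      B *ᵥ (fun i => (v i).im) = μ.im • (fun i => (v i).re) := by
  constructor <;> funext i <;>
  · have h := congrFun heig i
    simp only [mulVec, dotProduct, Matrix.map_apply, Pi.smul_apply, smul_eq_mul] at h
    have hre2 := congrArg Complex.re h
    have him2 := congrArg Complex.im h
    simp only [Complex.re_sum, Complex.im_sum, Complex.mul_re, Complex.mul_im,
      Complex.ofReal_re, Complex.ofReal_im] at hre2 him2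
    simp only [mulVec, dotProduct, Pi.smul_apply, smul_eq_mul]
    first
    | (rw [show ∑ j, B i j * (v j).re = (μ * v i).re by
        simpa [Complex.mul_re] using hre2]
       simp [Complex.mul_re, hre])
    | (rw [show ∑ j, B i j * (v j).im = (μ * v i).im by
        simpa [Complex.mul_im] using him2]
       simp [Complex.mul_im, hre])

lemma exp_rot (B : Matrix (Fin d) (Fin d) ℝ) (ω : ℝ)
    (ae be : EuclideanSpace ℝ (Fin d)) (hae : ae ∈ Ker B) (hbe : be ∈ Ker B)
    (hBa : Matrix.toEuclideanLin B ae = (-ω) • be)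
    (hBb : Matrix.toEuclideanLin B be = ω • ae) :
    (∀ t : ℝ, Cval B (NormedSpace.exp (t • Amap B) ae) = 0)
      ∧ (∀ t : ℝ, Cval B (NormedSpace.exp (t • Amap B) be) = 0) := by
  have hAa : Amap B ae = (-ω) • be := by
    rw [amap_eq B hae (hBa ▸ (Ker B).smul_mem _ hbe), hBa]
  have hAb : Amap B be = ω • ae := by
    rw [amap_eq B hbe (hBb ▸ (Ker B).smul_mem _ hae), hBb]
  constructor
  · set g : ℝ → EuclideanSpace ℝ (Fin d) :=
      fun t => Real.cos (ω*t) • ae - Real.sin (ω*t) • be with hgdef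
    have hg : ∀ t, HasDerivAt g (Amap B (g t)) t := by
      intro t
      have hc : HasDerivAt (fun t : ℝ => ω * t) ω t := by
        simpa using (hasDerivAt_id t).const_mul ω
      have h1 : HasDerivAt (fun t : ℝ => Real.cos (ω*t)) (-Real.sin (ω*t) * ω) t :=
        (Real.hasDerivAt_cos (ω*t)).comp t hc
      have h2 : HasDerivAt (fun t : ℝ => Real.sin (ω*t)) (Real.cos (ω*t) * ω) t :=
        (Real.hasDerivAt_sin (ω*t)).comp t hc
      have hd := (h1.smul_const ae).sub (h2.smul_const be)
      have : Amap B (g t)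
          = (-Real.sin (ω*t) * ω) • ae - (Real.cos (ω*t) * ω) • be := by
        rw [hgdef]
        simp only [map_sub, ContinuousLinearMap.map_smul, hAa, hAb]
        module
      rw [this]
      exact hd
    have hg0 : g 0 = ae := by simp [hgdef]
    intro t
    have hexp : NormedSpace.exp (t • Amap B) ae = g t := by
      rw [← hg0]; exact exp_ode_unique (Amap B) g hg t
    rw [hexp, cval_eq_zero_iff, hgdef]
    simp only [map_sub, LinearMap.map_smul, hBa, hBb]
    exact (Ker B).sub_mem ((Ker B).smul_mem _ ((Ker B).smul_mem _ hbe))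
      ((Ker B).smul_mem _ ((Ker B).smul_mem _ hae))
  · set g : ℝ → EuclideanSpace ℝ (Fin d) :=
      fun t => Real.sin (ω*t) • ae + Real.cos (ω*t) • be with hgdef
    have hg : ∀ t, HasDerivAt g (Amap B (g t)) t := by
      intro t
      have hc : HasDerivAt (fun t : ℝ => ω * t) ω t := by
        simpa using (hasDerivAt_id t).const_mul ω
      have h1 : HasDerivAt (fun t : ℝ => Real.cos (ω*t)) (-Real.sin (ω*t) * ω) t :=
        (Real.hasDerivAt_cos (ω*t)).comp t hc
      have h2 : HasDerivAt (fun t : ℝ => Real.sin (ω*t)) (Real.cos (ω*t) * ω) t :=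
        (Real.hasDerivAt_sin (ω*t)).comp t hc
      have hd := (h2.smul_const ae).add (h1.smul_const be)
      have : Amap B (g t)
          = (Real.cos (ω*t) * ω) • ae + (-Real.sin (ω*t) * ω) • be := by
        rw [hgdef]
        simp only [map_add, ContinuousLinearMap.map_smul, hAa, hAb]
        module
      rw [this]
      exact hd
    have hg0 : g 0 = be := by simp [hgdef]
    intro t
    have hexp : NormedSpace.exp (t • Amap B) be = g t := by
      rw [← hg0]; exact exp_ode_unique (Amap B) g hg t
    rw [hexp, cval_eq_zero_iff, hgdef]
    simp only [map_add, LinearMap.map_smul, hBa, hBb]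
    exact (Ker B).add_mem ((Ker B).smul_mem _ ((Ker B).smul_mem _ hbe))
      ((Ker B).smul_mem _ ((Ker B).smul_mem _ hae))

end Aux

/-- If `Bᵀ + B` is negative semidefinite then `B` is Hurwitz if and
only if the pair `(C, A)` is observable: the only `x ∈ K` with `C(exp(tA)x) = 0` for
all `t ∈ ℝ` is `x = 0`. -/
theorem isHurwitz_iff_pair_observable (B : Matrix (Fin d) (Fin d) ℝ)
    (hB : ∀ x : Fin d → ℝ, x ⬝ᵥ ((Bᵀ + B) *ᵥ x) ≤ 0) :
    IsHurwitz B ↔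
      ∀ x ∈ Ker B,
        (∀ t : ℝ, Cval B (NormedSpace.exp (t • Amap B) x) = 0) → x = 0 := by
  constructor
  · -- Hurwitz → observable
    intro hH x hxK hx
    by_contra hx0
    set A' := Amap B with hA'
    -- Step A
    have stepA : ∀ (n : ℕ) (t : ℝ),
        Cval B (NormedSpace.exp (t • A') ((A'^n) x)) = 0 := by
      set CvalL : EuclideanSpace ℝ (Fin d) →L[ℝ] ↥(Ker B)ᗮ :=
        ((Ker B)ᗮ.orthogonalProjectionOnto).comp
          (LinearMap.toContinuousLinearMap (Matrix.toEuclideanLin B)) with hCvalL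
      have hCval : ∀ y, Cval B y = CvalL y := fun y => rfl
      intro n
      induction n with
      | zero => intro t; simpa using hx t
      | succ n IH =>
        intro t
        have hder : HasDerivAt (fun s : ℝ => NormedSpace.exp (s • A') ((A'^n) x))
            (NormedSpace.exp (t • A') (A' ((A'^n) x))) t := by
          have := (hasDerivAt_exp_smul_const A' t).clm_apply (hasDerivAt_const t ((A'^n) x))
          simpa [ContinuousLinearMap.mul_apply] using this
        have hder2 : HasDerivAt (fun s : ℝ => CvalL (NormedSpace.exp (s • A') ((A'^n) x)))
            (CvalL (NormedSpace.exp (t • A') (A' ((A'^n) x)))) t :=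
          CvalL.hasFDerivAt.comp_hasDerivAt t hder
        have hzero : (fun s : ℝ => CvalL (NormedSpace.exp (s • A') ((A'^n) x)))
            = fun _ => (0 : ↥(Ker B)ᗮ) := funext fun s => by rw [← hCval]; exact IH s
        rw [hzero] at hder2
        have hd0 := hder2.unique (hasDerivAt_const t (0 : ↥(Ker B)ᗮ))
        have key : CvalL (NormedSpace.exp (t • A') ((A'^(n+1)) x)) = 0 := by
          rw [pow_succ']
          simpa using hd0
        rw [hCval]
        exact key
    have hCn : ∀ n : ℕ, Cval B ((A'^n) x) = 0 := by
      intro n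
      have := stepA n 0
      rw [show (0:ℝ) • A' = 0 from zero_smul ℝ A', NormedSpace.exp_zero] at this
      simpa using this
    -- Step C
    have stepC : ∀ n : ℕ, ((A'^n) x ∈ Ker B) ∧
        WithLp.equiv 2 _ ((A'^n) x) = (B^n) *ᵥ (WithLp.equiv 2 _ x) := by
      intro n
      induction n with
      | zero => simpa using hxK
      | succ n IH =>
        obtain ⟨hz, hzeq⟩ := IH
        have hBz : Matrix.toEuclideanLin B ((A'^n) x) ∈ Ker B :=
          (cval_eq_zero_iff B _).mp (hCn n)
        have hstep : ((A'^(n+1)) x) = Matrix.toEuclideanLin B ((A'^n) x) := by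
          rw [pow_succ']
          show A' ((A'^n) x) = _
          rw [hA', amap_eq B hz hBz]
        constructor
        · rw [hstep]; exact hBz
        · rw [hstep]
          have h2 : WithLp.equiv 2 _ (Matrix.toEuclideanLin B ((A'^n) x))
              = B *ᵥ (WithLp.equiv 2 _ ((A'^n) x)) := by
            simp [Matrix.toEuclideanLin_apply]
          rw [h2, hzeq, mulVec_mulVec, ← pow_succ']
    set xf : Fin d → ℝ := WithLp.equiv 2 _ x with hxfdef
    have hKn : ∀ n : ℕ, (Bᵀ + B) *ᵥ ((B^n) *ᵥ xf) = 0 := by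
      intro n
      have := (mem_Ker_iff B _).mp (stepC n).1
      rwa [(stepC n).2] at this
    have hxf : xf ≠ 0 := by
      intro h
      apply hx0
      have := congrArg (WithLp.equiv 2 (Fin d → ℝ)).symm h
      simpa [hxfdef] using this
    -- Step E
    set Bc := B.map (algebraMap ℝ ℂ) with hBc
    set T : (Fin d → ℂ) →ₗ[ℂ] (Fin d → ℂ) := Matrix.toLinAlgEquiv' Bc with hT
    set xc : Fin d → ℂ := castc xf with hxc
    have hTn : ∀ n : ℕ, (T^n) xc = castc ((B^n) *ᵥ xf) := by
      intro n
      induction n with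
      | zero => simp [one_mulVec, hxc]
      | succ n IH =>
        rw [pow_succ', Module.End.mul_apply, IH, hT, Matrix.toLinAlgEquiv'_apply,
          castc_mulVec, mulVec_mulVec, ← pow_succ']
    set U : Submodule ℂ (Fin d → ℂ) :=
      Submodule.span ℂ (Set.range fun n : ℕ => (T^n) xc) with hU
    have hUker : ∀ u ∈ U, ((Bᵀ + B).map (algebraMap ℝ ℂ)) *ᵥ u = 0 := by
      have hle : U ≤ LinearMap.ker (Matrix.toLinAlgEquiv'
          ((Bᵀ + B).map (algebraMap ℝ ℂ))) := by
        rw [hU, Submodule.span_le]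
        rintro _ ⟨n, rfl⟩
        rw [SetLike.mem_coe, LinearMap.mem_ker, Matrix.toLinAlgEquiv'_apply]
        show ((Bᵀ + B).map (algebraMap ℝ ℂ)) *ᵥ ((T^n) xc) = 0
        rw [hTn, castc_mulVec, hKn]
        exact castc_eq_zero_iff.mpr rfl
      intro u hu
      have := hle hu
      rwa [LinearMap.mem_ker, Matrix.toLinAlgEquiv'_apply] at this
    have hTU : ∀ z ∈ U, T z ∈ U := by
      intro z hz
      induction hz using Submodule.span_induction with
      | mem y hy =>
        obtain ⟨n, rfl⟩ := hy
        refine Submodule.subset_span ⟨n + 1, ?_⟩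
        show (T^(n+1)) xc = T ((T^n) xc)
        rw [pow_succ', Module.End.mul_apply]
      | zero => simp
      | add y z _ _ hy hz => rw [map_add]; exact U.add_mem hy hz
      | smul c y _ hy => rw [LinearMap.map_smul]; exact U.smul_mem c hy
    have hxcU : xc ∈ U := Submodule.subset_span ⟨0, by simp⟩
    have hxc0 : xc ≠ 0 := fun h => hxf (castc_eq_zero_iff.mp h)
    haveI : Nontrivial ↥U :=
      ⟨⟨xc, hxcU⟩, 0, fun h => hxc0 (by simpa [Subtype.ext_iff] using h)⟩
    obtain ⟨μ, hμ⟩ := Module.End.exists_eigenvalue (T.restrict hTU)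
    obtain ⟨u, hmem, hne⟩ := hμ.exists_hasEigenvector
    have heig : Bc *ᵥ (u : Fin d → ℂ) = μ • (u : Fin d → ℂ) := by
      have h1 : (T.restrict hTU) u = μ • u := Module.End.mem_eigenspace_iff.mp hmem
      have h2 : (((T.restrict hTU) u : ↥U) : Fin d → ℂ) = T (u : Fin d → ℂ) := rfl
      rw [← Matrix.toLinAlgEquiv'_apply, ← hT, ← h2, h1]
      rfl
    have hu0 : (u : Fin d → ℂ) ≠ 0 := fun h => hne (Subtype.ext h)
    have hre0 : μ.re = 0 := re_eq_zero_of_eigen_ker B μ u hu0 heig (hUker _ u.2)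
    have := hH μ (hasEigen_mem_spectrum B hu0 heig)
    linarith [this, hre0]
  · -- observable → Hurwitz
    intro hobs μ hμ
    obtain ⟨v, hv0, heig⟩ := spectrum_exists_eigenvector B hμ
    by_contra hlt
    push_neg at hlt
    -- the quadratic form
    obtain ⟨hs, hspos⟩ := star_dotProduct_self_pos hv0
    have htr := star_dot_transpose_mulVec B v μ heig
    have hmap : ((Bᵀ + B).map (algebraMap ℝ ℂ))
        = (B.map (algebraMap ℝ ℂ))ᵀ + (B.map (algebraMap ℝ ℂ)) := by
      rw [Matrix.map_add _ (map_add _), Matrix.transpose_map]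
    have hq : star v ⬝ᵥ (((Bᵀ + B).map (algebraMap ℝ ℂ)) *ᵥ v)
        = ((starRingEnd ℂ) μ + μ) * ((∑ i, Complex.normSq (v i) : ℝ) : ℂ) := by
      rw [hmap, add_mulVec, dotProduct_add, htr, heig]
      have h1 : star v ⬝ᵥ (μ • v) = μ * (star v ⬝ᵥ v) := by
        rw [dotProduct_smul]; rfl
      rw [h1, hs]
      ring
    have hqre : (star v ⬝ᵥ (((Bᵀ + B).map (algebraMap ℝ ℂ)) *ᵥ v)).re
        = 2 * μ.re * (∑ i, Complex.normSq (v i)) := by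
      rw [hq]
      have : (starRingEnd ℂ) μ + μ = ((2 * μ.re : ℝ) : ℂ) := by
        apply Complex.ext <;> simp [Complex.add_re, Complex.add_im, Complex.conj_re,
          Complex.conj_im] <;> ring
      rw [this, ← Complex.ofReal_mul]
      simp
    set a : Fin d → ℝ := fun i => (v i).re with hadef
    set b : Fin d → ℝ := fun i => (v i).im with hbdef
    have hquad := re_quadratic (Bᵀ + B) v
    rw [hqre] at hquad
    have hBa' := hB a
    have hBb' := hB b
    have hS : (0:ℝ) < ∑ i, Complex.normSq (v i) := hspos
    have hre0 : μ.re = 0 := by nlinarith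
    have haq : a ⬝ᵥ ((Bᵀ + B) *ᵥ a) = 0 ∧ b ⬝ᵥ ((Bᵀ + B) *ᵥ b) = 0 := by
      constructor <;> nlinarith
    have hpsd := psd_neg B hB
    have hMa : (Bᵀ + B) *ᵥ a = 0 := by
      have h0 : star a ⬝ᵥ ((-(Bᵀ + B)) *ᵥ a) = 0 := by
        simp only [star_trivial, neg_mulVec, dotProduct_neg, haq.1, neg_zero]
      have := (hpsd.dotProduct_mulVec_zero_iff a).mp h0
      rw [neg_mulVec, neg_eq_zero] at this
      exact this
    have hMb : (Bᵀ + B) *ᵥ b = 0 := by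
      have h0 : star b ⬝ᵥ ((-(Bᵀ + B)) *ᵥ b) = 0 := by
        simp only [star_trivial, neg_mulVec, dotProduct_neg, haq.2, neg_zero]
      have := (hpsd.dotProduct_mulVec_zero_iff b).mp h0
      rw [neg_mulVec, neg_eq_zero] at this
      exact this
    obtain ⟨hea, heb⟩ := eigen_parts B μ v heig hre0
    rw [← hadef, ← hbdef] at hea heb
    -- move to EuclideanSpace
    set ae : EuclideanSpace ℝ (Fin d) := (WithLp.equiv 2 (Fin d → ℝ)).symm a with haedef
    set be : EuclideanSpace ℝ (Fin d) := (WithLp.equiv 2 (Fin d → ℝ)).symm b with hbedef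
    have haeK : ae ∈ Ker B := by
      rw [mem_Ker_iff]
      simpa [haedef] using hMa
    have hbeK : be ∈ Ker B := by
      rw [mem_Ker_iff]
      simpa [hbedef] using hMb
    have hBae : Matrix.toEuclideanLin B ae = (-μ.im) • be := by
      apply (WithLp.equiv 2 (Fin d → ℝ)).injective
      exact hea
    have hBbe : Matrix.toEuclideanLin B be = μ.im • ae := by
      apply (WithLp.equiv 2 (Fin d → ℝ)).injective
      exact heb
    obtain ⟨hca, hcb⟩ := exp_rot B μ.im ae be haeK hbeK hBae hBbe
    have hae0 : ae = 0 := hobs ae haeK hca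
    have hbe0 : be = 0 := hobs be hbeK hcb
    have ha0 : a = 0 := by
      have := congrArg (WithLp.equiv 2 (Fin d → ℝ)) hae0
      simpa [haedef] using this
    have hb0 : b = 0 := by
      have := congrArg (WithLp.equiv 2 (Fin d → ℝ)) hbe0
      simpa [hbedef] using this
    apply hv0
    funext i
    apply Complex.ext
    · simpa using congrFun ha0 i
    · simpa using congrFun hb0 i

end
end

section
/- Consider the 2×2 real matrices B₀ = [[−1, −1],[1, −1]] and B₁ = [[−1, −3−2√2],[3−2√2, −1]]. Then: (i) the symmetric positive definite matrix P = [[1, 0],[0, 3+2√2]] satisfies B₀ᵀP + PB₀ ≤ 0 and B₁ᵀP + PB₁ ≤ 0 (both negative semidefinite), so P defines a common weak (non-strict) quadratic Lyapunov function; (ii) there exists no symmetric positive definite 2×2 real matrix Q such that both B₀ᵀQ + QB₀ and B₁ᵀQ + QB₁ are negative definite, i.e., the pair {B₀, B₁} admits no common strict quadratic Lyapunov function. -/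
open Matrix

noncomputable section

/-- Mason's example. For `B₀ = [[-1,-1],[1,-1]]` and
`B₁ = [[-1,-3-2√2],[3-2√2,-1]]`:
(i) the symmetric positive definite matrix `P = [[1,0],[0,3+2√2]]` satisfies
`BᵢᵀP + PBᵢ ≤ 0` for `i = 0,1` (a common weak quadratic Lyapunov function);
(ii) there is no symmetric positive definite `Q` with `BᵢᵀQ + QBᵢ < 0` for `i = 0,1`
(no common strict quadratic Lyapunov function). -/
theorem mason_example :
    let B₀ : Matrix (Fin 2) (Fin 2) ℝ := !![-1, -1; 1, -1]
    let B₁ : Matrix (Fin 2) (Fin 2) ℝ :=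
      !![-1, -3 - 2 * Real.sqrt 2; 3 - 2 * Real.sqrt 2, -1]
    let P : Matrix (Fin 2) (Fin 2) ℝ := !![1, 0; 0, 3 + 2 * Real.sqrt 2]
    (P.PosDef ∧
      (∀ x : Fin 2 → ℝ, x ⬝ᵥ ((B₀ᵀ * P + P * B₀) *ᵥ x) ≤ 0) ∧
      (∀ x : Fin 2 → ℝ, x ⬝ᵥ ((B₁ᵀ * P + P * B₁) *ᵥ x) ≤ 0)) ∧
    ¬ ∃ Q : Matrix (Fin 2) (Fin 2) ℝ, Q.PosDef ∧
      (∀ x : Fin 2 → ℝ, x ≠ 0 → x ⬝ᵥ ((B₀ᵀ * Q + Q * B₀) *ᵥ x) < 0) ∧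
      (∀ x : Fin 2 → ℝ, x ≠ 0 → x ⬝ᵥ ((B₁ᵀ * Q + Q * B₁) *ᵥ x) < 0) := by
  intro B₀ B₁ P
  have hs2 : Real.sqrt 2 ^ 2 = 2 := Real.sq_sqrt (by norm_num)
  have hs0 : (0:ℝ) < Real.sqrt 2 := Real.sqrt_pos.mpr (by norm_num)
  have hs1 : (1:ℝ) < Real.sqrt 2 := by nlinarith
  constructor
  · refine ⟨⟨?_, ?_⟩, ?_, ?_⟩
    · ext i j
      fin_cases i <;> fin_cases j <;>
        simp [P, Matrix.conjTranspose_apply]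
    · intro x hx
      have hx' : x 0 ≠ 0 ∨ x 1 ≠ 0 := by
        by_contra h
        push_neg at h
        apply hx
        ext i
        fin_cases i <;> simp [h.1, h.2]
      simp [P, Matrix.mulVec, dotProduct, Fin.sum_univ_two, Finsupp.sum_fintype]
      rcases hx' with h | h
      · nlinarith [sq_nonneg (x 0), sq_nonneg (x 1), sq_abs (x 0), abs_pos.mpr h]
      · nlinarith [sq_nonneg (x 0), sq_nonneg (x 1), abs_pos.mpr h, sq_abs (x 1)]
    · intro x
      have e : x ⬝ᵥ ((B₀ᵀ * P + P * B₀) *ᵥ x)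
          = -2 * (x 0 - (1 + Real.sqrt 2) * x 1) ^ 2 := by
        simp [B₀, P, Matrix.mulVec, dotProduct, Fin.sum_univ_two,
          Matrix.mul_apply, Matrix.transpose_apply, Matrix.cons_transpose,
          Matrix.vecHead, Matrix.vecTail]
        linear_combination (2 * x 1 ^ 2) * hs2
      rw [e]
      nlinarith [sq_nonneg (x 0 - (1 + Real.sqrt 2) * x 1)]
    · intro x
      have e : x ⬝ᵥ ((B₁ᵀ * P + P * B₁) *ᵥ x)
          = -2 * (x 0 + (1 + Real.sqrt 2) * x 1) ^ 2 := by
        simp [B₁, P, Matrix.mulVec, dotProduct, Fin.sum_univ_two,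
          Matrix.mul_apply, Matrix.transpose_apply, Matrix.cons_transpose,
          Matrix.vecHead, Matrix.vecTail]
        linear_combination (2 * x 1 ^ 2 - 8 * x 0 * x 1) * hs2
      rw [e]
      nlinarith [sq_nonneg (x 0 + (1 + Real.sqrt 2) * x 1)]
  · rintro ⟨Q, hQ, h0, h1⟩
    have hsym : Q 1 0 = Q 0 1 := by
      have := hQ.1
      have h := congrFun (congrFun this 1) 0
      simpa [Matrix.conjTranspose_apply] using h.symm
    have hx1 : (![1 + Real.sqrt 2, 1] : Fin 2 → ℝ) ≠ 0 := by
      intro h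
      have := congrFun h 1
      simp at this
    have hx2 : (![1 + Real.sqrt 2, -1] : Fin 2 → ℝ) ≠ 0 := by
      intro h
      have := congrFun h 1
      simp at this
    have H0 := h0 _ hx1
    have H1 := h1 _ hx2
    have key : (![1 + Real.sqrt 2, 1] : Fin 2 → ℝ) ⬝ᵥ ((B₀ᵀ * Q + Q * B₀) *ᵥ ![1 + Real.sqrt 2, 1])
        + (![1 + Real.sqrt 2, -1] : Fin 2 → ℝ) ⬝ᵥ ((B₁ᵀ * Q + Q * B₁) *ᵥ ![1 + Real.sqrt 2, -1]) = 0 := by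
      simp [B₀, B₁, Matrix.mulVec, dotProduct, Fin.sum_univ_two,
        Matrix.mul_apply, Matrix.transpose_apply, Matrix.cons_transpose,
        Matrix.vecHead, Matrix.vecTail]
      rw [hsym]
      linear_combination (4 * Q 1 1 - 4 * Real.sqrt 2 * Q 0 1) * hs2
    linarith [H0, H1, key]

end
end
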